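/- Let M = M_{a p^α, b p^α} be a local singular ACM with gcd(a,b) coprime conditions and let β be the least positive integer with p^β ∈ M. Then every element m ∈ M with v_p(m) ≥ α + β is reducible in M. -/

import Mathlib

/-- Membership in the arithmetical congruence monoid `M_{a,b} = (a + b ℕ₀) ∪ {1}`. -/
def acmMem (a b x : ℕ) : Prop := x = 1 ∨ ∃ k : ℕ, x = a + k * b

/-- `x` is an atom (irreducible) of `M_{a,b}`. -/
def acmAtom (a b x : ℕ) : Prop :=
  acmMem a b x ∧ x ≠ 1 ∧
    ∀ y z : ℕ, acmMem a b y → acmMem a b z → x = y * z → y = 1 ∨ z = 1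

/-- `s` is a factorization of `x` into atoms of `M_{a,b}`. -/
def acmFactorization (a b x : ℕ) (s : Multiset ℕ) : Prop :=
  (∀ u ∈ s, acmAtom a b u) ∧ s.prod = x

/-- The distance between two factorizations. -/
def facDist (s t : Multiset ℕ) : ℕ := max (Multiset.card (s - t)) (Multiset.card (t - s))

/-- There is an `N`-chain of factorizations of `x` from `z₁` to `z₂` in `M_{a,b}`. -/
def acmNChain (a b x N : ℕ) (z₁ z₂ : Multiset ℕ) : Prop :=
  ∃ L : List (Multiset ℕ), L ≠ [] ∧ L.head? = some z₁ ∧ L.getLast? = some z₂ ∧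
    (∀ z ∈ L, acmFactorization a b x z) ∧ L.Chain' (fun s t => facDist s t ≤ N)

/-- The set of `N` such that any two factorizations of any element of `M_{a,b}`
are connected by an `N`-chain; `c(M) = n` iff `n` is the least element of this set. -/
def acmCatSet (a b : ℕ) : Set ℕ :=
  {N | ∀ x, acmMem a b x → ∀ z₁ z₂, acmFactorization a b x z₁ →
      acmFactorization a b x z₂ → acmNChain a b x N z₁ z₂}

/-- Divisibility inside the monoid `M_{a,b}`. -/
def acmDvd (a b x y : ℕ) : Prop := ∃ k, acmMem a b k ∧ x * k = y

/-- `s` is a bullet of `x` in `M_{a,b}`. -/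
def acmBullet (a b x : ℕ) (s : Multiset ℕ) : Prop :=
  (∀ u ∈ s, acmAtom a b u) ∧ acmDvd a b x s.prod ∧
    ∀ t : Multiset ℕ, t ≤ s → t ≠ s → ¬ acmDvd a b x t.prod

/-- Omega primality of `x` in `M_{a,b}`: the sup of the lengths of bullets of `x`. -/
noncomputable def acmOmega (a b x : ℕ) : ℕ∞ :=
  sSup {n : ℕ∞ | ∃ s : Multiset ℕ, acmBullet a b x s ∧ (Multiset.card s : ℕ∞) = n}

/-- The set of factorization lengths of `x` in `M_{a,b}`. -/
def acmLengthSet (a b x : ℕ) : Set ℕ :=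
  {n | ∃ s : Multiset ℕ, acmFactorization a b x s ∧ Multiset.card s = n}

/-- `x` has at least two distinct factorization lengths. -/
def acmLI (a b x : ℕ) : Prop := ∃ m ∈ acmLengthSet a b x, ∃ n ∈ acmLengthSet a b x, m ≠ n

/-- The length density of an element `x` of `M_{a,b}`. -/
noncomputable def acmLD (a b x : ℕ) : ℝ :=
  (((acmLengthSet a b x).ncard : ℝ) - 1) /
    (((sSup (acmLengthSet a b x) : ℕ) : ℝ) - ((sInf (acmLengthSet a b x) : ℕ) : ℝ))


/-- In the local singular ACM `M = M_{a p^α, b p^α}` with `β` minimal such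
that `p^β ∈ M`, every `m ∈ M` with `v_p(m) ≥ α + β` is reducible. -/
theorem local_high_valuation_reducible (p a b α β : ℕ) (hp : p.Prime) (ha : 0 < a) (haleb : a ≤ b)
    (hab : Nat.Coprime a b) (hpa : ¬ p ∣ a) (hpb : ¬ p ∣ b) (hα : 0 < α)
    (hacm : (a * p ^ α) * (a * p ^ α) ≡ a * p ^ α [MOD b * p ^ α])
    (hβ : 0 < β) (hβmem : acmMem (a * p ^ α) (b * p ^ α) (p ^ β))
    (hβmin : ∀ γ : ℕ, 0 < γ → γ < β → ¬ acmMem (a * p ^ α) (b * p ^ α) (p ^ γ)) :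
    ∀ m : ℕ, acmMem (a * p ^ α) (b * p ^ α) m → α + β ≤ m.factorization p →
      ∃ y z : ℕ, acmMem (a * p ^ α) (b * p ^ α) y ∧ acmMem (a * p ^ α) (b * p ^ α) z ∧
        y ≠ 1 ∧ z ≠ 1 ∧ m = y * z := by
  intro m hm hval
  have hp1 : 1 < p := hp.one_lt
  have hpα : 0 < p ^ α := Nat.pow_pos hp.pos
  have hpowβ : 1 < p ^ β := Nat.one_lt_pow hβ.ne' hp1
  have hm1 : m ≠ 1 := by
    rintro rfl
    simp [Nat.factorization_one] at hval
    omega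
  obtain ⟨k, hk⟩ := hm.resolve_left hm1
  have hmpos : 0 < m := by
    have := Nat.mul_pos ha hpα
    omega
  -- p^(α+β) divides m
  have hdvd : p ^ (α + β) ∣ m :=
    (Nat.Prime.pow_dvd_iff_le_factorization hp hmpos.ne').mpr hval
  have hdvdβ : p ^ β ∣ m := dvd_trans (pow_dvd_pow p (Nat.le_add_left β α)) hdvd
  set z := m / p ^ β with hzdef
  have hz : m = p ^ β * z := (Nat.mul_div_cancel' hdvdβ).symm
  have hzpos : 0 < z := by
    rcases Nat.eq_zero_or_pos z with h | h
    · rw [h, mul_zero] at hz; omega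
    · exact h
  have hpαz : p ^ α ∣ z := by
    have h1 : p ^ β * p ^ α ∣ p ^ β * z := by
      rw [← pow_add, ← hz]
      exact dvd_trans (pow_dvd_pow p (by omega)) hdvd
    exact (mul_dvd_mul_iff_left (a := p ^ β) (by positivity)).mp h1
  have hcpb : Nat.Coprime p b := (Nat.Prime.coprime_iff_not_dvd hp).mpr hpb
  have hcop : Nat.Coprime (a * p ^ α) b := Nat.Coprime.mul hab (hcpb.pow_left α)
  -- a p^α ≡ 1 mod b
  have hmod1 : a * p ^ α ≡ 1 [MOD b] := by
    have h2 : (a * p ^ α) * (a * p ^ α) ≡ (a * p ^ α) * 1 [MOD b] := by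
      have := Nat.ModEq.of_dvd ⟨p ^ α, rfl⟩ hacm
      simpa using this
    exact Nat.ModEq.cancel_left_of_coprime hcop.symm h2
  -- p^β ∈ M gives p^β = a p^α + j b p^α
  obtain ⟨j, hj⟩ := hβmem.resolve_left (by omega)
  have hpβmod : p ^ β ≡ a * p ^ α [MOD b * p ^ α] := by
    rw [hj]; exact (Nat.add_mul_mod_self_right _ _ _)
  have hmmod : m ≡ a * p ^ α [MOD b * p ^ α] := by
    rw [hk]; exact (Nat.add_mul_mod_self_right _ _ _)
  -- z ≡ 1 mod b
  have hzb : z ≡ a * p ^ α [MOD b] := by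
    have hmb : m ≡ 1 [MOD b] :=
      (Nat.ModEq.of_dvd ⟨p ^ α, rfl⟩ hmmod).trans hmod1
    have hpβb : p ^ β ≡ 1 [MOD b] :=
      (Nat.ModEq.of_dvd ⟨p ^ α, rfl⟩ hpβmod).trans hmod1
    have hz1 : z ≡ 1 [MOD b] := by
      have : (1 : ℕ) * z ≡ p ^ β * z [MOD b] := Nat.ModEq.mul_right z hpβb.symm
      calc z = 1 * z := (one_mul z).symm
        _ ≡ p ^ β * z [MOD b] := this
        _ = m := hz.symm
        _ ≡ 1 [MOD b] := hmb
    exact hz1.trans hmod1.symm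
  -- z ≡ a p^α mod p^α
  have hzpα : z ≡ a * p ^ α [MOD p ^ α] := by
    have h1 : z ≡ 0 [MOD p ^ α] := (Nat.modEq_zero_iff_dvd).mpr hpαz
    have h2 : a * p ^ α ≡ 0 [MOD p ^ α] := (Nat.modEq_zero_iff_dvd).mpr ⟨a, mul_comm _ _⟩
    exact h1.trans h2.symm
  have hcbp : Nat.Coprime b (p ^ α) := (hcpb.symm).pow_right α
  have hzmod : z ≡ a * p ^ α [MOD b * p ^ α] :=
    (Nat.modEq_and_modEq_iff_modEq_mul hcbp).mp ⟨hzb, hzpα⟩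
  -- z ≥ a p^α
  have hzge : a * p ^ α ≤ z := by
    rcases lt_or_eq_of_le haleb with hlt | heq
    · have hres : (a * p ^ α) % (b * p ^ α) = a * p ^ α :=
        Nat.mod_eq_of_lt ((Nat.mul_lt_mul_right hpα).mpr hlt)
      have h3 := hzmod
      unfold Nat.ModEq at h3
      rw [hres] at h3
      exact h3 ▸ Nat.mod_le z _
    · have ha1 : a = 1 := by
        have h5 := hab
        rw [← heq] at h5
        simpa [Nat.Coprime, Nat.gcd_self] using h5
      rw [ha1, one_mul]
      exact Nat.le_of_dvd hzpos hpαz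
  obtain ⟨t, ht⟩ := (Nat.modEq_iff_dvd' hzge).mp hzmod.symm
  refine ⟨p ^ β, z, hβmem, Or.inr ⟨t, by rw [mul_comm t (b * p ^ α)]; omega⟩, by omega, ?_, hz⟩
  have h1 : p ^ α ≤ a * p ^ α := Nat.le_mul_of_pos_left _ ha
  have h2 : p ≤ p ^ α := Nat.le_self_pow hα.ne' p
  omega
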